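/- Given separated monads S_i (i∈I) and an object A, every fixpoint (X_i)_{i∈I} of the functor H_A (i.e., X_i ≅ S̄_i(A + ∐_{j≠i} X_j) for all i) yields a multi-algebra structure on A + ∐_{i∈I} X_i: for each i, A + ∐_{i∈I} X_i ≅ S_i Y_i where Y_i = A + ∐_{j≠i} X_j, and the algebra structure for S_i is transported from the free-algebra structure μ^i_{Y_i}. -/

import Mathlib

open CategoryTheory CategoryTheory.Limits

universe v u

/-- Separation data for a monad `S`: a complement `S̄` of the unit, i.e. an
endofunctor of the category `A_m` of objects and monomorphisms of `A` (given by an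
object assignment together with a functorial action on monomorphisms) such that
`S = Id + S̄` on `A_m`, with the unit `η` as the left coproduct injection.
A monad is *separated* if it preserves monomorphisms and admits such data. -/
structure SeparationData {A : Type u} [Category.{v} A] [HasBinaryCoproducts A]
    (S : Monad A) where
  /-- the action of `S̄` on objects -/
  obj : A → A
  /-- the action of `S̄` on monomorphisms -/
  map : ∀ {X Y : A} (f : X ⟶ Y), Mono f → (obj X ⟶ obj Y)
  map_mono : ∀ {X Y : A} (f : X ⟶ Y) (hf : Mono f), Mono (map f hf)
  map_id : ∀ (X : A) (h : Mono (𝟙 X)), map (𝟙 X) h = 𝟙 (obj X)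
  map_comp : ∀ {X Y Z : A} (f : X ⟶ Y) (g : Y ⟶ Z) (hf : Mono f) (hg : Mono g)
    (hfg : Mono (f ≫ g)), map (f ≫ g) hfg = map f hf ≫ map g hg
  /-- the right coproduct injection `S̄ X ⟶ S X` -/
  ι : ∀ X : A, obj X ⟶ S.toFunctor.obj X
  ι_mono : ∀ X : A, Mono (ι X)
  /-- `S X` is the coproduct `X + S̄ X` with the unit as the left injection -/
  isCoprod : ∀ X : A, IsIso (Limits.coprod.desc (S.η.app X) (ι X))
  /-- naturality of the complement inclusion with respect to monomorphisms -/
  natural : ∀ {X Y : A} (f : X ⟶ Y) (hf : Mono f),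
    map f hf ≫ ι Y = ι X ≫ S.toFunctor.map f

-- auxiliary lemmas

theorem transported_unit {A : Type u} [Category.{v} A] (T : Monad A) {B C : A}
    (e : C ≅ T.obj B) :
    T.η.app C ≫ (T.toFunctor.map e.hom ≫ T.μ.app B ≫ e.inv) = 𝟙 C := by
  rw [← Category.assoc, ← T.η.naturality e.hom]
  simp [T.right_unit B]

theorem transported_assoc {A : Type u} [Category.{v} A] (T : Monad A) {B C : A}
    (e : C ≅ T.obj B) :
    T.toFunctor.map (T.toFunctor.map e.hom ≫ T.μ.app B ≫ e.inv) ≫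
        (T.toFunctor.map e.hom ≫ T.μ.app B ≫ e.inv) =
      T.μ.app C ≫ (T.toFunctor.map e.hom ≫ T.μ.app B ≫ e.inv) := by
  simp only [Functor.map_comp, Category.assoc]
  rw [← Category.assoc (T.toFunctor.map e.inv), ← Functor.map_comp, e.inv_hom_id]
  simp only [CategoryTheory.Functor.map_id, Category.id_comp]
  rw [← Category.assoc (T.toFunctor.map (T.μ.app B)), T.assoc]
  have h := T.μ.naturality e.hom
  simp only [Functor.comp_map] at h
  simp only [← Category.assoc]
  rw [h]

open scoped Classical in
noncomputable def coprodSplitHom {A : Type u} [Category.{v} A] [HasColimits A]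
    {I : Type v} (Xs : I → A) (A₀ : A) (i : I) :
    (A₀ ⨿ ∐ fun j : I => Xs j) ⟶
      (A₀ ⨿ ∐ fun j : {j : I // j ≠ i} => Xs j.1) ⨿ Xs i :=
  coprod.desc (coprod.inl ≫ coprod.inl)
    (Sigma.desc fun j =>
      if h : j = i then eqToHom (congrArg Xs h) ≫ coprod.inr
      else (Sigma.ι (fun j : {j : I // j ≠ i} => Xs j.1) ⟨j, h⟩ ≫ coprod.inr) ≫ coprod.inl)

noncomputable def coprodSplitInv {A : Type u} [Category.{v} A] [HasColimits A]
    {I : Type v} (Xs : I → A) (A₀ : A) (i : I) :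
    ((A₀ ⨿ ∐ fun j : {j : I // j ≠ i} => Xs j.1) ⨿ Xs i) ⟶
      (A₀ ⨿ ∐ fun j : I => Xs j) :=
  coprod.desc
    (coprod.desc coprod.inl (Sigma.desc fun j => Sigma.ι Xs j.1 ≫ coprod.inr))
    (Sigma.ι Xs i ≫ coprod.inr)

noncomputable def coprodSplitIso {A : Type u} [Category.{v} A] [HasColimits A]
    {I : Type v} (Xs : I → A) (A₀ : A) (i : I) :
    (A₀ ⨿ ∐ fun j : I => Xs j) ≅
      (A₀ ⨿ ∐ fun j : {j : I // j ≠ i} => Xs j.1) ⨿ Xs i where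
  hom := coprodSplitHom Xs A₀ i
  inv := coprodSplitInv Xs A₀ i
  hom_inv_id := by
    ext j
    · simp only [coprodSplitHom, coprodSplitInv, Category.assoc, Category.comp_id, coprod.inl_desc_assoc, coprod.inl_desc]
    · by_cases h : j = i
      · subst h; simp only [coprodSplitHom, coprodSplitInv, Category.assoc, Category.comp_id, Category.id_comp, coprod.inr_desc_assoc, coprod.inr_desc, Sigma.ι_desc_assoc, dif_pos rfl, eqToHom_refl]
      · simp only [coprodSplitHom, coprodSplitInv, Category.assoc, Category.comp_id, coprod.inr_desc_assoc, Sigma.ι_desc_assoc, dif_neg h]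
        erw [coprod.inl_desc, coprod.inr_desc, Sigma.ι_desc]
  inv_hom_id := by
    ext j
    · simp only [coprodSplitHom, coprodSplitInv, Category.assoc, Category.comp_id, coprod.inl_desc_assoc, coprod.inl_desc]
    · simp only [coprodSplitHom, coprodSplitInv, Category.assoc, Category.comp_id, coprod.inl_desc_assoc, coprod.inr_desc_assoc, Sigma.ι_desc_assoc]
      erw [coprod.inr_desc, Sigma.ι_desc, dif_neg j.2]
    · simp only [coprodSplitHom, coprodSplitInv, Category.assoc, Category.comp_id, Category.id_comp, coprod.inr_desc_assoc, coprod.inr_desc, Sigma.ι_desc, dif_pos rfl, eqToHom_refl]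


/-- Every fixpoint `(X_i)` of `H_{A₀}` (i.e. `X_i ≅ S̄_i Y_i` for
`Y_i = A₀ + ∐_{j≠i} X_j`) yields a multi-algebra structure on `A₀ + ∐ᵢ X_i`:
for each `i` there is an isomorphism `A₀ + ∐ᵢ X_i ≅ S_i Y_i`, and the algebra
structure for `S_i` transported along it from the free-algebra structure
`μ^i_{Y_i}` is an Eilenberg–Moore algebra structure. -/
theorem stmt16 (A : Type u) [Category.{v} A] [HasColimits A]
    {I : Type v} (S : I → Monad A)
    (hmono : ∀ i, (S i).toFunctor.PreservesMonomorphisms)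
    (sep : ∀ i, SeparationData (S i))
    (A₀ : A) (Xs : I → A)
    (hfix : ∀ i : I,
      Nonempty ((sep i).obj (A₀ ⨿ ∐ fun j : {j : I // j ≠ i} => Xs j.1) ≅ Xs i)) :
    ∀ i : I, ∃ e : (A₀ ⨿ ∐ fun i : I => Xs i) ≅
        (S i).toFunctor.obj (A₀ ⨿ ∐ fun j : {j : I // j ≠ i} => Xs j.1),
      (S i).η.app (A₀ ⨿ ∐ fun i : I => Xs i) ≫
          ((S i).toFunctor.map e.hom ≫ (S i).μ.app _ ≫ e.inv) = 𝟙 _ ∧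
      (S i).toFunctor.map ((S i).toFunctor.map e.hom ≫ (S i).μ.app _ ≫ e.inv) ≫
          ((S i).toFunctor.map e.hom ≫ (S i).μ.app _ ≫ e.inv) =
        (S i).μ.app (A₀ ⨿ ∐ fun i : I => Xs i) ≫
          ((S i).toFunctor.map e.hom ≫ (S i).μ.app _ ≫ e.inv) := by
  intro i
  set Yi := A₀ ⨿ ∐ fun j : {j : I // j ≠ i} => Xs j.1 with hYi
  haveI := (sep i).isCoprod Yi
  let e : (A₀ ⨿ ∐ fun i : I => Xs i) ≅ (S i).toFunctor.obj Yi :=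
    coprodSplitIso Xs A₀ i ≪≫ coprod.mapIso (Iso.refl Yi) ((hfix i).some.symm) ≪≫
      @asIso A _ _ _ (coprod.desc ((S i).η.app Yi) ((sep i).ι Yi)) ((sep i).isCoprod Yi)
  exact ⟨e, transported_unit (S i) e, transported_assoc (S i) e⟩
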